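/- Let A be a topological *-algebra, σ a continuous submultiplicative seminorm on A, and D ≥ 0 a constant with σ(a*) ≤ D·σ(a) for all a ∈ A. Suppose that every p ∈ N(A) is bounded by some multiple of σ (for each p ∈ N(A) there is a constant C_p ≥ 0 with p(x) ≤ C_p·σ(x) for all x). Then every p ∈ N(A) satisfies the uniform bound p(a) ≤ √D·σ(a) for all a ∈ A; in particular, γ(x) := sup_{p ∈ N(A)} p(x) is finite for every x and γ is continuous on A. -/

import Mathlib

open Set Topology

/-- `p` is a continuous C*-seminorm on the topological `*`-algebra `A`:
it is submultiplicative, satisfies the C*-identity, and is continuous. -/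
def IsContCstarSeminorm {A : Type*} [Ring A] [StarRing A] [Module ℂ A]
    [TopologicalSpace A] (p : Seminorm ℂ A) : Prop :=
  Continuous p ∧ (∀ a b : A, p (a * b) ≤ p a * p b) ∧ ∀ a : A, p (star a * a) = p a ^ 2

variable {A : Type*}
  [Ring A] [Algebra ℂ A] [StarRing A] [StarModule ℂ A]
  [TopologicalSpace A] [IsTopologicalRing A] [ContinuousStar A] [ContinuousSMul ℂ A]

/-- If `σ` is a continuous submultiplicative seminorm on `A` with `σ(a*) ≤ D·σ(a)`, and every
continuous C*-seminorm is bounded by some multiple of `σ`, then every continuous C*-seminorm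
satisfies the uniform bound `p(a) ≤ √D·σ(a)`; in particular `γ(x) = sup_{p ∈ N(A)} p(x)` is
finite for every `x` and continuous on `A`. -/
theorem cstarSeminorms_uniformly_bounded (σ : Seminorm ℂ A) (hσc : Continuous σ)
    (hσsub : ∀ a b : A, σ (a * b) ≤ σ a * σ b)
    (D : ℝ) (hD : 0 ≤ D) (hstar : ∀ a : A, σ (star a) ≤ D * σ a)
    (hbound : ∀ p : Seminorm ℂ A, IsContCstarSeminorm p →
      ∃ C : ℝ, 0 ≤ C ∧ ∀ x : A, p x ≤ C * σ x) :
    (∀ p : Seminorm ℂ A, IsContCstarSeminorm p → ∀ a : A, p a ≤ Real.sqrt D * σ a) ∧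
      (∀ x : A, BddAbove {y : ℝ | ∃ p : Seminorm ℂ A, IsContCstarSeminorm p ∧ y = p x}) ∧
      Continuous fun x : A =>
        sSup {y : ℝ | ∃ p : Seminorm ℂ A, IsContCstarSeminorm p ∧ y = p x} := by
  -- Part 1
  have part1 : ∀ p : Seminorm ℂ A, IsContCstarSeminorm p → ∀ a : A, p a ≤ Real.sqrt D * σ a := by
    intro p hp a
    obtain ⟨C, hC0, hC⟩ := hbound p hp
    obtain ⟨hpc, hpsub, hpcstar⟩ := hp
    set b := star a * a with hb
    have hbsa : star b = b := by simp [hb, mul_comm]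
    -- σ b ≤ D * σ a ^ 2
    have hσb : σ b ≤ D * σ a ^ 2 := by
      calc σ b ≤ σ (star a) * σ a := hσsub _ _
        _ ≤ (D * σ a) * σ a := by
            exact mul_le_mul_of_nonneg_right (hstar a) (apply_nonneg σ a)
        _ = D * σ a ^ 2 := by ring
    -- σ (b ^ 2^n) ≤ σ b ^ 2^n
    have he : ∀ n : ℕ, (2:ℕ) ^ (n + 1) = 2 ^ n + 2 ^ n := by
      intro n; rw [pow_succ, mul_two]
    have hσpow : ∀ n : ℕ, σ (b ^ 2 ^ n) ≤ σ b ^ 2 ^ n := by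
      intro n
      induction n with
      | zero => simp
      | succ n ih =>
        rw [he n, pow_add, pow_add]
        calc σ (b ^ 2 ^ n * b ^ 2 ^ n) ≤ σ (b ^ 2 ^ n) * σ (b ^ 2 ^ n) := hσsub _ _
          _ ≤ σ b ^ 2 ^ n * σ b ^ 2 ^ n :=
            mul_le_mul ih ih (apply_nonneg σ _) (pow_nonneg (apply_nonneg σ b) _)
    -- p (b ^ 2^n) = p b ^ 2^n
    have hppow : ∀ n : ℕ, p (b ^ 2 ^ n) = p b ^ 2 ^ n := by
      intro n
      induction n with
      | zero => simp
      | succ n ih =>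
        have h1 : b ^ 2 ^ n * b ^ 2 ^ n = star (b ^ 2 ^ n) * b ^ 2 ^ n := by
          rw [star_pow, hbsa]
        rw [he n, pow_add, h1, hpcstar, ih]; ring
    -- key inequality
    have key : ∀ n : ℕ, p a ^ 2 ^ (n + 1) ≤ C * (Real.sqrt D * σ a) ^ 2 ^ (n + 1) := by
      intro n
      have hpb : p b = p a ^ 2 := hpcstar a
      have h1 : p a ^ 2 ^ (n + 1) = p b ^ 2 ^ n := by
        rw [hpb, ← pow_mul, ← pow_succ']
      have hsq : (Real.sqrt D * σ a) ^ 2 = D * σ a ^ 2 := by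
        rw [mul_pow, Real.sq_sqrt hD]
      have h2 : (Real.sqrt D * σ a) ^ 2 ^ (n + 1) = (D * σ a ^ 2) ^ 2 ^ n := by
        rw [pow_succ', pow_mul, hsq]
      rw [h1, h2, ← hppow]
      calc p (b ^ 2 ^ n) ≤ C * σ (b ^ 2 ^ n) := hC _
        _ ≤ C * σ b ^ 2 ^ n := mul_le_mul_of_nonneg_left (hσpow n) hC0
        _ ≤ C * (D * σ a ^ 2) ^ 2 ^ n :=
          mul_le_mul_of_nonneg_left (pow_le_pow_left₀ (apply_nonneg σ b) hσb _) hC0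
    -- conclude
    set t := Real.sqrt D * σ a with ht
    have ht0 : 0 ≤ t := mul_nonneg (Real.sqrt_nonneg D) (apply_nonneg σ a)
    by_contra hlt
    push_neg at hlt
    have htpos : 0 < p a := lt_of_le_of_lt ht0 hlt
    rcases eq_or_lt_of_le ht0 with h0 | h0
    · -- t = 0 : then p a ^ 2 ≤ 0, contradiction
      have := key 0
      rw [← h0] at this
      simp at this
      have : p a ^ 2 ≤ 0 := by simp [this]
      nlinarith
    · have hr : 1 < p a / t := (one_lt_div h0).mpr hlt
      obtain ⟨m, hm⟩ := pow_unbounded_of_one_lt C hr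
      have h2m : m ≤ 2 ^ (m + 1) := le_trans (Nat.le_of_lt (Nat.lt_two_pow_self (n := m))) (Nat.pow_le_pow_right (by norm_num) (Nat.le_succ m))
      have h3 : (p a / t) ^ m ≤ (p a / t) ^ 2 ^ (m + 1) :=
        pow_le_pow_right₀ (le_of_lt hr) h2m
      have h4 : (p a / t) ^ 2 ^ (m + 1) ≤ C := by
        rw [div_pow, div_le_iff₀ (by positivity)]
        exact key m
      linarith
  refine ⟨part1, ?_, ?_⟩
  · intro x
    exact ⟨Real.sqrt D * σ x, by rintro y ⟨p, hp, rfl⟩; exact part1 p hp x⟩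
  · -- continuity
    have hbdd : ∀ x : A, BddAbove {y : ℝ | ∃ p : Seminorm ℂ A, IsContCstarSeminorm p ∧ y = p x} :=
      fun x => ⟨Real.sqrt D * σ x, by rintro y ⟨p, hp, rfl⟩; exact part1 p hp x⟩
    have hzero : IsContCstarSeminorm (0 : Seminorm ℂ A) := by
      refine ⟨?_, ?_, ?_⟩
      · exact (continuous_const : Continuous fun _ : A => (0 : ℝ))
      · intro a b; simp
      · intro a; simp
    have hne : ∀ x : A, (0 : ℝ) ∈ {y : ℝ | ∃ p : Seminorm ℂ A, IsContCstarSeminorm p ∧ y = p x} :=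
      fun x => ⟨0, hzero, by simp⟩
    set γ := fun x : A => sSup {y : ℝ | ∃ p : Seminorm ℂ A, IsContCstarSeminorm p ∧ y = p x} with hγ
    have hlip : ∀ x y : A, γ x ≤ γ y + Real.sqrt D * σ (x - y) := by
      intro x y
      apply Real.sSup_le
      · rintro z ⟨p, hp, rfl⟩
        have h1 : p x ≤ p y + p (x - y) := by
          calc p x = p (y + (x - y)) := by rw [add_sub_cancel]
            _ ≤ p y + p (x - y) := map_add_le_add p _ _
        have h2 : p y ≤ γ y := le_csSup (hbdd y) ⟨p, hp, rfl⟩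
        have h3 : p (x - y) ≤ Real.sqrt D * σ (x - y) := part1 p hp _
        linarith
      · have : (0:ℝ) ≤ γ y := le_csSup (hbdd y) (hne y)
        have h3 : 0 ≤ Real.sqrt D * σ (x - y) := by positivity
        linarith
    rw [continuous_iff_continuousAt]
    intro x₀
    have hσ0 : Filter.Tendsto (fun x : A => Real.sqrt D * σ (x - x₀)) (𝓝 x₀) (𝓝 0) := by
      have hc : Continuous fun x : A => Real.sqrt D * σ (x - x₀) :=
        continuous_const.mul (hσc.comp (continuous_id.sub continuous_const))
      have := hc.continuousAt (x := x₀)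
      simpa [ContinuousAt, map_zero] using this
    have hupper : Filter.Tendsto (fun x : A => γ x₀ + Real.sqrt D * σ (x - x₀)) (𝓝 x₀) (𝓝 (γ x₀)) := by
      simpa using (tendsto_const_nhds.add hσ0)
    have hlower : Filter.Tendsto (fun x : A => γ x₀ - Real.sqrt D * σ (x - x₀)) (𝓝 x₀) (𝓝 (γ x₀)) := by
      simpa using (tendsto_const_nhds.sub hσ0)
    refine tendsto_of_tendsto_of_tendsto_of_le_of_le hlower hupper ?_ ?_
    · intro x
      have := hlip x₀ x
      have hsym : σ (x₀ - x) = σ (x - x₀) := by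
        rw [← neg_sub x x₀, map_neg_eq_map]
      rw [hsym] at this
      show γ x₀ - Real.sqrt D * σ (x - x₀) ≤ γ x
      linarith
    · intro x
      show γ x ≤ γ x₀ + Real.sqrt D * σ (x - x₀)
      exact hlip x x₀
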